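/- Gumbel-Top-b produces samples without replacement: let p be a probability distribution on a finite nonempty set 𝒳 with p(x) > 0 for all x, let (G_x)_{x∈𝒳} be independent standard Gumbel random variables, and let 1 ≤ b ≤ |𝒳|. Then for all pairwise distinct x_1,…,x_b ∈ 𝒳, the probability that the b largest values of x ↦ log p(x) + G_x are attained at x_1,…,x_b in strictly decreasing order equals ∏_{i=1}^{b} p(x_i) / (1 − Σ_{j=1}^{i−1} p(x_j)); that is, the ordered Gumbel-Top-b output is distributed as b successive samples drawn without replacement from p. -/

import Mathlib

open scoped BigOperators
open MeasureTheory

/-- A probability distribution on a finite alphabet. -/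
def IsProbDist {X : Type*} [Fintype X] (p : X → ℝ) : Prop :=
  (∀ x, 0 ≤ p x) ∧ ∑ x, p x = 1

/-- A standard Gumbel random variable: a measurable real-valued random variable with
cumulative distribution function `t ↦ exp(−exp(−t))`. -/
def IsStdGumbel {Ω : Type*} [MeasurableSpace Ω] (μ : Measure Ω) (g : Ω → ℝ) : Prop :=
  Measurable g ∧ ∀ t : ℝ, (μ {ω | g ω ≤ t}).toReal = Real.exp (-Real.exp (-t))

open Set Filter

namespace GumbelSWOR

/-- density of the Gumbel(log c) distribution -/
noncomputable def dens (c : ℝ) : ℝ → ℝ :=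
  fun s => c * Real.exp (-s) * Real.exp (-(c * Real.exp (-s)))

lemma dens_nonneg {c : ℝ} (hc : 0 < c) (s : ℝ) : 0 ≤ dens c s := by
  unfold dens; positivity

lemma hasDerivAt_anti (c : ℝ) (u : ℝ) :
    HasDerivAt (fun u => -Real.exp (-(c * Real.exp u))) (c * Real.exp u * Real.exp (-(c * Real.exp u))) u := by
  have h1 : HasDerivAt (fun u => -(c * Real.exp u)) (-(c * Real.exp u)) u :=
    ((Real.hasDerivAt_exp u).const_mul c).neg
  have h2 : HasDerivAt (fun u => -Real.exp (-(c * Real.exp u))) (-(Real.exp (-(c * Real.exp u)) * -(c * Real.exp u))) u := (h1.exp).neg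
  convert h2 using 1
  ring

lemma integrableOn_dens_neg {c : ℝ} (hc : 0 < c) (a : ℝ) :
    IntegrableOn (fun u => c * Real.exp u * Real.exp (-(c * Real.exp u))) (Ioi a) := by
  apply integrableOn_Ioi_deriv_of_nonneg' (g := fun u => -Real.exp (-(c * Real.exp u)))
    (fun x _ => hasDerivAt_anti c x)
  · intro x _; positivity
  · have h1 : Tendsto (fun u : ℝ => -(c * Real.exp u)) atTop atBot := by
      exact Filter.tendsto_neg_atBot_iff.mpr (Real.tendsto_exp_atTop.const_mul_atTop hc)
    have h2 : Tendsto (fun u : ℝ => Real.exp (-(c * Real.exp u))) atTop (nhds 0) :=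
      Real.tendsto_exp_atBot.comp h1
    simpa using h2.neg

lemma integral_dens_Iic {c : ℝ} (hc : 0 < c) (t : ℝ) :
    ∫ s in Iic t, dens c s = Real.exp (-(c * Real.exp (-t))) := by
  have h : ∫ s in Iic t, dens c s = ∫ u in Ioi (-t), c * Real.exp u * Real.exp (-(c * Real.exp u)) := by
    rw [← integral_comp_neg_Iic]
    rfl
  rw [h]
  have := integral_Ioi_of_hasDerivAt_of_tendsto' (a := -t)
    (f := fun u => -Real.exp (-(c * Real.exp u)))
    (f' := fun u => c * Real.exp u * Real.exp (-(c * Real.exp u)))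
    (m := 0)
    (fun x _ => hasDerivAt_anti c x) (integrableOn_dens_neg hc (-t)) ?_
  · rw [this]; simp
  · have h1 : Tendsto (fun u : ℝ => -(c * Real.exp u)) atTop atBot :=
      Filter.tendsto_neg_atBot_iff.mpr (Real.tendsto_exp_atTop.const_mul_atTop hc)
    have h2 : Tendsto (fun u : ℝ => Real.exp (-(c * Real.exp u))) atTop (nhds 0) :=
      Real.tendsto_exp_atBot.comp h1
    simpa using h2.neg

lemma restrict_Iio_eq_map_neg (t : ℝ) :
    (volume : Measure ℝ).restrict (Iio t) = ((volume : Measure ℝ).restrict (Ioi (-t))).map (fun x => -x) := by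
  have A : MeasurableEmbedding fun x : ℝ => -x :=
    (Homeomorph.neg ℝ).isClosedEmbedding.measurableEmbedding
  have h := A.restrict_map (volume : Measure ℝ) (Iio t)
  rw [Measure.map_neg_eq_self (volume : Measure ℝ)] at h
  rw [h]
  congr 1
  ext x
  simp [neg_lt]

lemma integrableOn_dens_Iic {c : ℝ} (hc : 0 < c) (t : ℝ) :
    IntegrableOn (dens c) (Iic t) := by
  have A : MeasurableEmbedding fun x : ℝ => -x :=
    (Homeomorph.neg ℝ).isClosedEmbedding.measurableEmbedding
  rw [IntegrableOn, ← MeasureTheory.restrict_Iio_eq_restrict_Iic, restrict_Iio_eq_map_neg,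
    A.integrable_map_iff]
  have := integrableOn_dens_neg hc (-t)
  apply this.congr_fun ?_ measurableSet_Ioi
  intro x _
  simp [dens, Function.comp]


/-- The Gumbel distribution with location `log c`. -/
noncomputable def gm (c : ℝ) : Measure ℝ := volume.withDensity (fun s => ENNReal.ofReal (dens c s))

lemma measurable_dens (c : ℝ) : Measurable (dens c) := by
  unfold dens; fun_prop

lemma gm_Iic {c : ℝ} (hc : 0 < c) (t : ℝ) :
    gm c (Iic t) = ENNReal.ofReal (Real.exp (-(c * Real.exp (-t)))) := by
  rw [gm, withDensity_apply _ measurableSet_Iic,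
    ← ofReal_integral_eq_lintegral_ofReal (integrableOn_dens_Iic hc t)
      (Filter.Eventually.of_forall (dens_nonneg hc)), integral_dens_Iic hc]

lemma gm_singleton (c t : ℝ) : gm c {t} = 0 := by
  rw [gm, withDensity_apply _ (measurableSet_singleton t)]
  rw [Measure.restrict_singleton]
  simp

lemma gm_Iio {c : ℝ} (hc : 0 < c) (t : ℝ) :
    gm c (Iio t) = ENNReal.ofReal (Real.exp (-(c * Real.exp (-t)))) := by
  rw [measure_congr (Iio_ae_eq_Iic' (gm_singleton c t)), gm_Iic hc]

lemma tendsto_exp_shape (c : ℝ) :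
    Tendsto (fun t : ℝ => Real.exp (-(c * Real.exp (-t)))) atTop (nhds 1) := by
  have h1 : Tendsto (fun t : ℝ => -(c * Real.exp (-t))) atTop (nhds 0) := by
    have : Tendsto (fun t : ℝ => Real.exp (-t)) atTop (nhds 0) :=
      Real.tendsto_exp_atBot.comp (Filter.tendsto_neg_atBot_iff.mpr tendsto_id)
    simpa using ((this.const_mul c).neg)
  simpa [Function.comp_def] using (Real.continuous_exp.tendsto 0).comp h1

lemma gm_univ {c : ℝ} (hc : 0 < c) : gm c univ = 1 := by
  have h1 := tendsto_measure_Iic_atTop (μ := gm c)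
  have h2 : Tendsto (fun t : ℝ => gm c (Iic t)) atTop (nhds 1) := by
    have := (ENNReal.tendsto_ofReal (tendsto_exp_shape c))
    simp only [ENNReal.ofReal_one] at this
    apply this.congr
    intro t; rw [gm_Iic hc]
  exact tendsto_nhds_unique h1 h2

lemma gm_isProbabilityMeasure {c : ℝ} (hc : 0 < c) : IsProbabilityMeasure (gm c) :=
  ⟨gm_univ hc⟩

lemma map_eq_gm {Ω : Type*} [MeasurableSpace Ω] (μ : Measure Ω) [IsProbabilityMeasure μ]
    {Y : Ω → ℝ} (hY : Measurable Y) {c : ℝ} (hc : 0 < c)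
    (hcdf : ∀ t, μ {ω | Y ω ≤ t} = ENNReal.ofReal (Real.exp (-(c * Real.exp (-t))))) :
    μ.map Y = gm c := by
  have : IsProbabilityMeasure (μ.map Y) := Measure.isProbabilityMeasure_map hY.aemeasurable
  refine MeasureTheory.Measure.ext_of_Iic (μ.map Y) (gm c) fun t => ?_
  rw [Measure.map_apply hY measurableSet_Iic, gm_Iic hc]
  exact hcdf t

section EP

variable {X : Type*}

/-- The "capped ordering" event: the coordinates listed in `L` are strictly decreasing,
all of them below the cap `t`, and every coordinate in `S` is below all of them (and `t`). -/
def EP (S : Finset X) : List X → ℝ → (X → ℝ) → Prop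
  | [], t, f => ∀ y ∈ S, f y < t
  | x :: L, t, f => f x < t ∧ EP S L (f x) f

lemma EP_congr {S : Finset X} : ∀ (L : List X) (t : ℝ) {f g : X → ℝ},
    (∀ y ∈ S, f y = g y) → (∀ x ∈ L, f x = g x) → (EP S L t f ↔ EP S L t g)
  | [], t, f, g, hS, _ => by
      simp only [EP]
      exact ⟨fun h y hy => hS y hy ▸ h y hy, fun h y hy => (hS y hy).symm ▸ h y hy⟩
  | x :: L, t, f, g, hS, hL => by
      simp only [EP]
      rw [hL x (List.mem_cons_self), EP_congr L (g x) hS (fun z hz => hL z (List.mem_cons_of_mem x hz))]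

lemma EP_mono {S : Finset X} : ∀ (L : List X) {t t' : ℝ}, t ≤ t' → ∀ {f : X → ℝ},
    EP S L t f → EP S L t' f
  | [], t, t', h, f, hf => fun y hy => lt_of_lt_of_le (hf y hy) h
  | x :: L, t, t', h, f, hf => ⟨lt_of_lt_of_le hf.1 h, hf.2⟩

lemma measurableSet_EP (S : Finset X) : ∀ L : List X,
    MeasurableSet {q : ℝ × (X → ℝ) | EP S L q.1 q.2}
  | [] => by
      have : {q : ℝ × (X → ℝ) | EP S [] q.1 q.2} = ⋂ y ∈ (S : Set X), {q | q.2 y < q.1} := by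
        ext q; simp [EP]
      rw [this]
      refine MeasurableSet.biInter S.countable_toSet fun y _ => ?_
      exact measurableSet_lt (by fun_prop) measurable_fst
  | x :: L => by
      have : {q : ℝ × (X → ℝ) | EP S (x :: L) q.1 q.2} =
          {q : ℝ × (X → ℝ) | q.2 x < q.1} ∩
            ((fun q : ℝ × (X → ℝ) => (q.2 x, q.2)) ⁻¹' {r : ℝ × (X → ℝ) | EP S L r.1 r.2}) := by
        ext q; simp [EP, Set.mem_setOf_eq]
      rw [this]
      refine MeasurableSet.inter ?_ ?_
      · exact measurableSet_lt (by fun_prop) measurable_fst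
      · exact MeasurableSet.preimage (measurableSet_EP S L) (by fun_prop)

/-- The probability constant appearing in the Gumbel-top-b formula. -/
noncomputable def Cprod (w : X → ℝ) (WS : ℝ) : List X → ℝ
  | [] => 1
  | x :: L => w x / (WS + (w x + (L.map w).sum)) * Cprod w WS L

lemma Cprod_nonneg {w : X → ℝ} (hw : ∀ x, 0 < w x) {WS : ℝ} (hWS : 0 ≤ WS) :
    ∀ L : List X, 0 ≤ Cprod w WS L
  | [] => zero_le_one
  | x :: L => by
      rw [Cprod]
      refine mul_nonneg (div_nonneg (hw x).le ?_) (Cprod_nonneg hw hWS L)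
      have : 0 ≤ (L.map w).sum := List.sum_nonneg (by
        intro a ha
        obtain ⟨z, _, rfl⟩ := List.mem_map.mp ha
        exact (hw z).le)
      nlinarith [(hw x).le]

end EP

section Core

open ProbabilityTheory

lemma core {X : Type*} {Ω : Type*} [MeasurableSpace Ω] (μ : Measure Ω) [IsProbabilityMeasure μ]
    (w : X → ℝ) (hw : ∀ x, 0 < w x) (Y : X → Ω → ℝ) (hmeas : ∀ x, Measurable (Y x))
    (hlaw : ∀ x, μ.map (Y x) = gm (w x))
    (hind : iIndepFun (m := fun _ : X => (inferInstance : MeasurableSpace ℝ)) Y μ) :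
    ∀ (L : List X) (S : Finset X), L.Nodup → (∀ x ∈ L, x ∉ S) → ∀ t : ℝ,
    μ {ω | EP S L t (fun x => Y x ω)} =
      ENNReal.ofReal (Cprod w (∑ y ∈ S, w y) L *
        Real.exp (-(((∑ y ∈ S, w y) + (L.map w).sum) * Real.exp (-t)))) := by
  classical
  intro L
  induction L with
  | nil =>
    intro S _ _ t
    have hev : {ω | EP S ([] : List X) t (fun x => Y x ω)} = ⋂ y ∈ S, Y y ⁻¹' (Iio t) := by
      ext ω; simp [EP]
    rw [hev, hind.measure_inter_preimage_eq_mul S (sets := fun _ => Iio t)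
      (fun _ _ => measurableSet_Iio)]
    have hterm : ∀ y ∈ S, μ (Y y ⁻¹' Iio t) = ENNReal.ofReal (Real.exp (-(w y * Real.exp (-t)))) := by
      intro y _
      rw [← Measure.map_apply (hmeas y) measurableSet_Iio, hlaw y, gm_Iio (hw y)]
    rw [Finset.prod_congr rfl hterm,
      ← ENNReal.ofReal_prod_of_nonneg (fun _ _ => (Real.exp_pos _).le)]
    congr 1
    rw [← Real.exp_sum]
    simp only [Cprod, List.map_nil, List.sum_nil, add_zero, one_mul]
    congr 1
    rw [Finset.sum_mul]
    simp
  | cons x L ih =>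
    intro S hnd hdisj t
    obtain ⟨hxL, hndL⟩ := List.nodup_cons.mp hnd
    have hxS : x ∉ S := hdisj x (List.mem_cons_self)
    have hdisjL : ∀ z ∈ L, z ∉ S := fun z hz => hdisj z (List.mem_cons_of_mem x hz)
    set WS : ℝ := ∑ y ∈ S, w y with hWS
    set T : Finset X := S ∪ L.toFinset with hT
    have hxT : x ∉ T := by simp [hT, hxS, hxL]
    set R : Ω → ({z // z ∈ T} → ℝ) := fun ω y => Y y.1 ω with hR
    have hRmeas : Measurable R := measurable_pi_lambda _ fun y => hmeas y.1
    set extT : ({z // z ∈ T} → ℝ) → (X → ℝ) :=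
      fun g z => if h : z ∈ T then g ⟨z, h⟩ else 0 with hextdef
    have hextmeas : Measurable extT := measurable_pi_lambda _ fun z => by
      by_cases h : z ∈ T
      · simp only [hextdef, h, dif_pos]
        exact measurable_pi_apply _
      · simp only [hextdef, h, dif_neg, not_false_iff]
        exact measurable_const
    have hIF : IndepFun (Y x) R μ := by
      have hd : Disjoint ({x} : Finset X) T := by
        simp [Finset.disjoint_left, hxT]
      have h1 := hind.indepFun_finset {x} T hd hmeas
      have h2 := h1.comp (φ := fun g : {z // z ∈ ({x} : Finset X)} → ℝ =>
        g ⟨x, Finset.mem_singleton_self x⟩) (ψ := id) (_mγ := (inferInstance : MeasurableSpace ℝ))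
        (measurable_pi_apply (⟨x, Finset.mem_singleton_self x⟩ : {z // z ∈ ({x} : Finset X)})) measurable_id
      exact h2
    set C : Set (ℝ × ({z // z ∈ T} → ℝ)) :=
      {q | q.1 < t ∧ EP S L q.1 (extT q.2)} with hC
    have hCmeas : MeasurableSet C := by
      have h1 : C = {q : ℝ × ({z // z ∈ T} → ℝ) | q.1 < t} ∩
          ((fun q : ℝ × ({z // z ∈ T} → ℝ) => (q.1, extT q.2)) ⁻¹'
            {r : ℝ × (X → ℝ) | EP S L r.1 r.2}) := by
        ext q; simp [hC, Set.mem_setOf_eq]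
      rw [h1]
      exact (measurableSet_lt measurable_fst measurable_const).inter
        ((measurableSet_EP S L).preimage (measurable_fst.prodMk (hextmeas.comp measurable_snd)))
    have hagree : ∀ ω : Ω, (∀ y ∈ S, extT (R ω) y = Y y ω) ∧ (∀ z ∈ L, extT (R ω) z = Y z ω) := by
      intro ω
      constructor
      · intro y hy
        have hyT : y ∈ T := by simp [hT, hy]
        simp only [hextdef, hR, dif_pos hyT]
      · intro z hz
        have hzT : z ∈ T := by simp [hT, hz]
        simp only [hextdef, hR, dif_pos hzT]
    have hev : {ω | EP S (x :: L) t (fun z => Y z ω)} = (fun ω => (Y x ω, R ω)) ⁻¹' C := by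
      ext ω
      simp only [Set.mem_preimage, hC, Set.mem_setOf_eq]
      show EP S (x :: L) t (fun z => Y z ω) ↔ _
      rw [show EP S (x :: L) t (fun z => Y z ω) ↔ (Y x ω < t ∧ EP S L (Y x ω) (fun z => Y z ω)) from Iff.rfl]
      constructor
      · rintro ⟨h1, h2⟩
        exact ⟨h1, (EP_congr L (Y x ω) (fun y hy => ((hagree ω).1 y hy).symm)
          (fun z hz => ((hagree ω).2 z hz).symm)).mp h2⟩
      · rintro ⟨h1, h2⟩
        exact ⟨h1, (EP_congr L (Y x ω) (fun y hy => (hagree ω).1 y hy)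
          (fun z hz => (hagree ω).2 z hz)).mp h2⟩
    have hpairmeas : Measurable fun ω => (Y x ω, R ω) := (hmeas x).prodMk hRmeas
    have hprobR : IsProbabilityMeasure (μ.map R) := Measure.isProbabilityMeasure_map hRmeas.aemeasurable
    have hprobYx : IsProbabilityMeasure (μ.map (Y x)) :=
      Measure.isProbabilityMeasure_map (hmeas x).aemeasurable
    rw [hev, ← Measure.map_apply hpairmeas hCmeas,
      (indepFun_iff_map_prod_eq_prod_map_map (hmeas x).aemeasurable hRmeas.aemeasurable).mp hIF,
      Measure.prod_apply hCmeas]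
    set sumL : ℝ := (L.map w).sum with hsumL
    have hsumLnn : 0 ≤ sumL := List.sum_nonneg (by
      intro a ha
      obtain ⟨z, _, rfl⟩ := List.mem_map.mp ha
      exact (hw z).le)
    have hWSnn : 0 ≤ WS := Finset.sum_nonneg fun y _ => (hw y).le
    set Cst : ℝ := Cprod w WS L with hCst
    have hCstnn : 0 ≤ Cst := Cprod_nonneg hw hWSnn L
    have hsect : ∀ s : ℝ, (μ.map R) (Prod.mk s ⁻¹' C) =
        (Iio t).indicator (fun s => ENNReal.ofReal
          (Cst * Real.exp (-((WS + sumL) * Real.exp (-s))))) s := by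
      intro s
      by_cases hst : s < t
      · have hsec : Prod.mk s ⁻¹' C = {g : {z // z ∈ T} → ℝ | EP S L s (extT g)} := by
          ext g; simp [hC, hst]
        have hsecmeas : MeasurableSet {g : {z // z ∈ T} → ℝ | EP S L s (extT g)} := by
          have : {g : {z // z ∈ T} → ℝ | EP S L s (extT g)} =
              (fun g => ((s : ℝ), extT g)) ⁻¹' {r : ℝ × (X → ℝ) | EP S L r.1 r.2} := by
            ext g; simp
          rw [this]
          exact (measurableSet_EP S L).preimage (measurable_const.prodMk hextmeas)
        rw [hsec, Set.indicator_of_mem (Set.mem_Iio.mpr hst), Measure.map_apply hRmeas hsecmeas]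
        have hpre : R ⁻¹' {g | EP S L s (extT g)} = {ω | EP S L s (fun z => Y z ω)} := by
          ext ω
          simp only [Set.mem_preimage, Set.mem_setOf_eq]
          exact EP_congr L s (fun y hy => (hagree ω).1 y hy) (fun z hz => (hagree ω).2 z hz)
        rw [hpre, ih S hndL hdisjL s]
      · have hsec : Prod.mk s ⁻¹' C = ∅ := by
          ext g; simp [hC, hst]
        rw [hsec, Set.indicator_of_notMem (by simpa using hst)]
        simp
    rw [lintegral_congr hsect, hlaw x, lintegral_indicator measurableSet_Iio _, gm,
      restrict_withDensity measurableSet_Iio,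
      lintegral_withDensity_eq_lintegral_mul _ ((measurable_dens (w x)).ennreal_ofReal)
        (by fun_prop)]
    set cW : ℝ := WS + (w x + sumL) with hcW
    have hcWpos : 0 < cW := by have := hw x; linarith
    have hptwise : ∀ s : ℝ,
        ENNReal.ofReal (dens (w x) s) *
          ENNReal.ofReal (Cst * Real.exp (-((WS + sumL) * Real.exp (-s))))
        = ENNReal.ofReal ((Cst * w x / cW) * dens cW s) := by
      intro s
      rw [← ENNReal.ofReal_mul (dens_nonneg (hw x) s)]
      congr 1
      have h1 : Real.exp (-(w x * Real.exp (-s))) * Real.exp (-((WS + sumL) * Real.exp (-s)))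
          = Real.exp (-(cW * Real.exp (-s))) := by
        rw [← Real.exp_add]; congr 1; rw [hcW]; ring
      have h2 : Cst * w x / cW * dens cW s
          = Cst * w x * Real.exp (-s) * Real.exp (-(cW * Real.exp (-s))) := by
        unfold dens
        field_simp
      rw [h2, ← h1]
      unfold dens
      ring
    simp only [Pi.mul_apply]
    rw [lintegral_congr hptwise]
    have hint : IntegrableOn (fun s => (Cst * w x / cW) * dens cW s) (Iio t) := by
      rw [IntegrableOn, MeasureTheory.restrict_Iio_eq_restrict_Iic]
      exact (integrableOn_dens_Iic hcWpos t).const_mul _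
    rw [← ofReal_integral_eq_lintegral_ofReal hint (Filter.Eventually.of_forall
      (fun s => mul_nonneg (div_nonneg (mul_nonneg hCstnn (hw x).le) hcWpos.le) (dens_nonneg hcWpos s)))]
    rw [MeasureTheory.restrict_Iio_eq_restrict_Iic]
    rw [MeasureTheory.integral_const_mul]
    rw [show ∫ s in Iic t, dens cW s = Real.exp (-(cW * Real.exp (-t))) from integral_dens_Iic hcWpos t]
    congr 1
    simp only [Cprod, List.map_cons, List.sum_cons, hcW, ← hsumL, ← hCst, ← hWS]
    ring

end Core

section Glue

variable {X : Type*}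

lemma EP_iff (S : Finset X) : ∀ (L : List X) (t : ℝ) (f : X → ℝ),
    EP S L t f ↔ ((∀ a ∈ L, f a < t) ∧ List.Pairwise (fun a b => f b < f a) L ∧
      (∀ y ∈ S, f y < t ∧ ∀ a ∈ L, f y < f a))
  | [], t, f => by simp [EP]
  | x :: L, t, f => by
      rw [show EP S (x :: L) t f ↔ (f x < t ∧ EP S L (f x) f) from Iff.rfl,
        EP_iff S L (f x) f]
      constructor
      · rintro ⟨h1, h2, h3, h4⟩
        refine ⟨?_, ?_, ?_⟩
        · intro a ha
          rcases List.mem_cons.mp ha with rfl | ha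
          · exact h1
          · exact (h2 a ha).trans h1
        · exact List.pairwise_cons.mpr ⟨h2, h3⟩
        · intro y hy
          refine ⟨(h4 y hy).1.trans h1, ?_⟩
          intro a ha
          rcases List.mem_cons.mp ha with rfl | ha
          · exact (h4 y hy).1
          · exact (h4 y hy).2 a ha
      · rintro ⟨h1, h2, h3⟩
        obtain ⟨h2a, h2b⟩ := List.pairwise_cons.mp h2
        refine ⟨h1 x (List.mem_cons_self), h2a, h2b, ?_⟩
        intro y hy
        exact ⟨(h3 y hy).2 x (List.mem_cons_self),
          fun a ha => (h3 y hy).2 a (List.mem_cons_of_mem x ha)⟩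

lemma Ici_succ_eq_map {n : ℕ} (i : Fin n) :
    Finset.Ici i.succ = (Finset.Ici i).map (Fin.succEmb n) := by
  ext j
  simp only [Finset.mem_Ici, Finset.mem_map]
  constructor
  · intro hj
    refine Fin.cases ?_ ?_ j hj
    · intro h
      have := lt_of_lt_of_le (Fin.succ_pos i) h
      exact absurd this (lt_irrefl _)
    · intro k hk
      exact ⟨k, Fin.succ_le_succ_iff.mp hk, rfl⟩
  · rintro ⟨k, hk, rfl⟩
    exact Fin.succ_le_succ_iff.mpr hk

lemma Cprod_ofFn (w : X → ℝ) (WS : ℝ) : ∀ (n : ℕ) (xs : Fin n → X),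
    Cprod w WS (List.ofFn xs) = ∏ i : Fin n, w (xs i) / (WS + ∑ j ∈ Finset.Ici i, w (xs j))
  | 0, xs => by simp [Cprod]
  | n + 1, xs => by
      rw [List.ofFn_succ]
      show w (xs 0) / (WS + (w (xs 0) + (List.map w (List.ofFn fun i => xs i.succ)).sum)) *
        Cprod w WS (List.ofFn fun i => xs i.succ) = _
      rw [Cprod_ofFn w WS n (fun i => xs i.succ), Fin.prod_univ_succ]
      have h0 : Finset.Ici (0 : Fin (n + 1)) = Finset.univ := by
        ext j; simp [Fin.zero_le]
      have hsum0 : ∑ j ∈ Finset.Ici (0 : Fin (n + 1)), w (xs j)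
          = w (xs 0) + ∑ i : Fin n, w (xs i.succ) := by
        rw [h0, Fin.sum_univ_succ]
      have hmapsum : (List.map w (List.ofFn fun i => xs i.succ)).sum
          = ∑ i : Fin n, w (xs i.succ) := by
        rw [List.map_ofFn, List.sum_ofFn]
        rfl
      have hIci : ∀ i : Fin n, ∑ j ∈ Finset.Ici i.succ, w (xs j)
          = ∑ k ∈ Finset.Ici i, w (xs k.succ) := by
        intro i
        rw [Ici_succ_eq_map i, Finset.sum_map]
        rfl
      rw [hmapsum, hsum0]
      congr 1
      apply Finset.prod_congr rfl
      intro i _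
      rw [hIci i]

end Glue

end GumbelSWOR

open ProbabilityTheory GumbelSWOR

/-- **Gumbel-Top-b produces samples without replacement:** for pairwise distinct
`x_1, …, x_b`, the probability that the `b` largest values of `x ↦ log p(x) + G_x` are
attained at `x_1, …, x_b` in strictly decreasing order equals
`∏ᵢ p(x_i) / (1 − Σ_{j < i} p(x_j))`, the law of `b` successive samples drawn without
replacement from `p`. -/
theorem gumbel_top_b_swor {X Ω : Type*} [Fintype X] [Nonempty X]
    [MeasurableSpace Ω] (μ : Measure Ω) [IsProbabilityMeasure μ]
    (p : X → ℝ) (hp : IsProbDist p) (hppos : ∀ x, 0 < p x)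
    (G : X → Ω → ℝ)
    (hG : ∀ x, IsStdGumbel μ (G x))
    (hindep : ProbabilityTheory.iIndepFun (m := fun _ : X => (inferInstance : MeasurableSpace ℝ))
      G μ)
    (b : ℕ) (hb1 : 1 ≤ b) (hb2 : b ≤ Fintype.card X)
    (xs : Fin b → X) (hxs : Function.Injective xs) :
    (μ {ω |
        (∀ i j : Fin b, i < j →
          Real.log (p (xs j)) + G (xs j) ω < Real.log (p (xs i)) + G (xs i) ω) ∧
        ∀ y : X, (∀ i : Fin b, xs i ≠ y) → ∀ i : Fin b,
          Real.log (p y) + G y ω < Real.log (p (xs i)) + G (xs i) ω}).toReal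
      = ∏ i : Fin b, p (xs i) / (1 - ∑ j ∈ Finset.Iio i, p (xs j)) := by
    classical
  have hY : ∀ x, Measurable (fun ω => Real.log (p x) + G x ω) :=
    fun x => measurable_const.add (hG x).1
  have hlaw : ∀ x, μ.map (fun ω => Real.log (p x) + G x ω) = gm (p x) := by
    intro x
    apply map_eq_gm μ (hY x) (hppos x)
    intro t
    have hset : {ω | Real.log (p x) + G x ω ≤ t} = {ω | G x ω ≤ t - Real.log (p x)} := by
      ext ω
      simp only [Set.mem_setOf_eq]
      constructor <;> intro h <;> linarith
    rw [hset]
    have h2 := (hG x).2 (t - Real.log (p x))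
    have hne : μ {ω | G x ω ≤ t - Real.log (p x)} ≠ ⊤ := measure_ne_top μ _
    rw [← ENNReal.ofReal_toReal hne, h2]
    congr 2
    rw [show -(t - Real.log (p x)) = Real.log (p x) + (-t) by ring, Real.exp_add,
      Real.exp_log (hppos x)]
  have hind' : iIndepFun (m := fun _ : X => (inferInstance : MeasurableSpace ℝ))
      (fun x ω => Real.log (p x) + G x ω) μ :=
    hindep.comp (g := fun x : X => fun r : ℝ => Real.log (p x) + r)
      (fun x => measurable_const.add measurable_id)
  set S : Finset X := Finset.univ \ Finset.image xs Finset.univ with hS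
  set L : List X := List.ofFn xs with hL
  have hnd : L.Nodup := List.nodup_ofFn.mpr hxs
  have hdisj : ∀ z ∈ L, z ∉ S := by
    intro z hz
    obtain ⟨i, rfl⟩ := List.mem_ofFn.mp hz
    simp only [hS, Finset.mem_sdiff, Finset.mem_univ, true_and, not_not]
    exact Finset.mem_image.mpr ⟨i, Finset.mem_univ i, rfl⟩
  have hsumL : (L.map p).sum = ∑ j : Fin b, p (xs j) := by
    rw [hL, List.map_ofFn, List.sum_ofFn]; rfl
  have htot : (∑ y ∈ S, p y) + ∑ j : Fin b, p (xs j) = 1 := by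
    have himg : ∑ y ∈ Finset.image xs Finset.univ, p y = ∑ j : Fin b, p (xs j) :=
      Finset.sum_image (fun i _ j _ h => hxs h)
    rw [← himg, hS]
    rw [Finset.sum_sdiff_eq_sub (Finset.subset_univ _)]
    have := hp.2
    linarith
  have hWS1 : (∑ y ∈ S, p y) + (L.map p).sum = 1 := by rw [hsumL]; exact htot
  have hWSnn : 0 ≤ ∑ y ∈ S, p y := Finset.sum_nonneg fun y _ => (hppos y).le
  have hev : {ω |
        (∀ i j : Fin b, i < j →
          Real.log (p (xs j)) + G (xs j) ω < Real.log (p (xs i)) + G (xs i) ω) ∧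
        ∀ y : X, (∀ i : Fin b, xs i ≠ y) → ∀ i : Fin b,
          Real.log (p y) + G y ω < Real.log (p (xs i)) + G (xs i) ω}
      = ⋃ n : ℕ, {ω | EP S L (n : ℝ) (fun z => Real.log (p z) + G z ω)} := by
    ext ω
    simp only [Set.mem_setOf_eq, Set.mem_iUnion]
    constructor
    · rintro ⟨h1, h2⟩
      obtain ⟨n, hn⟩ := exists_nat_gt (Finset.univ.sup' Finset.univ_nonempty
        (fun z => Real.log (p z) + G z ω))
      refine ⟨n, (EP_iff S L n _).mpr ⟨?_, ?_, ?_⟩⟩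
      · intro a _
        exact lt_of_le_of_lt (Finset.le_sup' (fun z => Real.log (p z) + G z ω) (Finset.mem_univ a)) hn
      · rw [hL]
        exact List.pairwise_ofFn.mpr (fun i j hij => h1 i j hij)
      · intro y hy
        have hyim : ∀ i, xs i ≠ y := by
          intro i hcon
          rw [hS] at hy
          simp only [Finset.mem_sdiff, Finset.mem_univ, true_and] at hy
          exact hy (Finset.mem_image.mpr ⟨i, Finset.mem_univ i, hcon⟩)
        refine ⟨lt_of_le_of_lt (Finset.le_sup' (fun z => Real.log (p z) + G z ω) (Finset.mem_univ y)) hn, ?_⟩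
        intro a ha
        rw [hL] at ha
        obtain ⟨i, rfl⟩ := List.mem_ofFn.mp ha
        exact h2 y hyim i
    · rintro ⟨n, hn⟩
      rw [EP_iff] at hn
      obtain ⟨h1, h2, h3⟩ := hn
      rw [hL] at h2
      constructor
      · intro i j hij
        exact List.pairwise_ofFn.mp h2 hij
      · intro y hy i
        have hyS : y ∈ S := by
          rw [hS]
          simp only [Finset.mem_sdiff, Finset.mem_univ, true_and]
          intro hcon
          obtain ⟨i', -, hix⟩ := Finset.mem_image.mp hcon
          exact hy i' hix
        exact (h3 y hyS).2 _ (by rw [hL]; exact List.mem_ofFn.mpr ⟨i, rfl⟩)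
  have hmono : Monotone (fun n : ℕ =>
      {ω | EP S L (n : ℝ) (fun z => Real.log (p z) + G z ω)}) := by
    intro m n hmn ω hω
    exact EP_mono L (by exact_mod_cast hmn) hω
  have htend := tendsto_measure_iUnion_atTop (μ := μ) hmono
  set Cst : ℝ := Cprod p (∑ y ∈ S, p y) L with hCst
  have hCstnn : 0 ≤ Cst := Cprod_nonneg hppos hWSnn L
  have hval : ∀ n : ℕ, μ {ω | EP S L (n : ℝ) (fun z => Real.log (p z) + G z ω)}
      = ENNReal.ofReal (Cst * Real.exp (-(1 * Real.exp (-(n : ℝ))))) := by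
    intro n
    rw [core μ p hppos _ hY hlaw hind' L S hnd hdisj (n : ℝ), hWS1]
  have htend2 : Tendsto (fun n : ℕ =>
      μ {ω | EP S L (n : ℝ) (fun z => Real.log (p z) + G z ω)}) atTop
      (nhds (ENNReal.ofReal Cst)) := by
    have hreal : Tendsto (fun n : ℕ => Cst * Real.exp (-(1 * Real.exp (-(n : ℝ))))) atTop
        (nhds Cst) := by
      have h1 : Tendsto (fun t : ℝ => Real.exp (-(1 * Real.exp (-t)))) atTop (nhds 1) :=
        tendsto_exp_shape 1
      have h2 := (h1.comp (tendsto_natCast_atTop_atTop (R := ℝ))).const_mul Cst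
      simpa using h2
    have := ENNReal.tendsto_ofReal hreal
    apply this.congr
    intro n
    rw [hval n]
  have hmeasure : μ {ω |
        (∀ i j : Fin b, i < j →
          Real.log (p (xs j)) + G (xs j) ω < Real.log (p (xs i)) + G (xs i) ω) ∧
        ∀ y : X, (∀ i : Fin b, xs i ≠ y) → ∀ i : Fin b,
          Real.log (p y) + G y ω < Real.log (p (xs i)) + G (xs i) ω}
      = ENNReal.ofReal Cst := by
    rw [hev]
    exact tendsto_nhds_unique htend htend2
  rw [hmeasure, ENNReal.toReal_ofReal hCstnn, hCst, hL, Cprod_ofFn]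
  apply Finset.prod_congr rfl
  intro i _
  congr 1
  have hsplit : (∑ j ∈ Finset.Iio i, p (xs j)) + ∑ j ∈ Finset.Ici i, p (xs j)
      = ∑ j : Fin b, p (xs j) := by
    rw [← Finset.sum_union (by simp [Finset.disjoint_left])]
    congr 1
    ext j
    simp only [Finset.mem_union, Finset.mem_Iio, Finset.mem_Ici, Finset.mem_univ, iff_true]
    exact lt_or_ge j i
  linarith [htot, hsplit]
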